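/- The semidirect product ℤ ⋉_φ F₂, where F₂ = ⟨a,b⟩ is free of rank 2 and the generator of ℤ acts by φ(a) = b⁻¹, φ(b) = ab, is isomorphic to the trefoil knot group ⟨x,y | x²=y³⟩. -/

import Mathlib

open FreeGroup

/-- The semidirect product `F₂ ⋊_φ ℤ`, where `F₂ = ⟨a,b⟩` is free of rank 2
(`a = of false`, `b = of true`) and the generator of `ℤ` acts by the automorphism
`φ : a ↦ b⁻¹, b ↦ ab`, is isomorphic to the trefoil knot group `⟨x,y | x² = y³⟩`. -/

theorem stmt_10 (φ : MulAut (FreeGroup Bool))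
    (ha : φ (of false) = (of true)⁻¹)
    (hb : φ (of true) = of false * of true) :
    Nonempty
      ((FreeGroup Bool) ⋊[(zpowersHom (MulAut (FreeGroup Bool)) φ :
            Multiplicative ℤ →* MulAut (FreeGroup Bool))] Multiplicative ℤ ≃*
        PresentedGroup ({of false ^ 2 * (of true ^ 3)⁻¹} : Set (FreeGroup Bool))) := by
  set rels : Set (FreeGroup Bool) := {of false ^ 2 * (of true ^ 3)⁻¹} with hrels
  set T := PresentedGroup rels with hT
  set X : T := PresentedGroup.of false with hX
  set Y : T := PresentedGroup.of true with hY
  -- the relation in T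
  have hXY : X ^ 2 = Y ^ 3 := by
    have h1 : PresentedGroup.mk rels (of false ^ 2 * (of true ^ 3)⁻¹) = 1 :=
      (QuotientGroup.eq_one_iff _).2 (Subgroup.subset_normalClosure rfl)
    have h2 : X ^ 2 * (Y ^ 3)⁻¹ = 1 := by
      simp only [_root_.map_mul, _root_.map_pow, _root_.map_inv] at h1; exact h1
    rw [← mul_inv_eq_one]; exact h2
  have hXinv : X⁻¹ = (Y ^ 3)⁻¹ * X := by rw [← hXY]; group
  -- images of the generators of the semidirect product
  set A : T := X⁻¹ * Y ^ 2 * X⁻¹ * Y with hA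
  set B : T := Y⁻¹ * Y⁻¹ * X * Y⁻¹ * X with hB
  set C : T := X⁻¹ * Y with hC
  set f₁ : FreeGroup Bool →* T := FreeGroup.lift (fun b => bif b then B else A) with hf₁
  set f₂ : Multiplicative ℤ →* T := zpowersHom T C with hf₂
  have hkey : Y ^ 2 * X⁻¹ = Y⁻¹ * X := by rw [hXinv]; group
  have H1 : f₁.comp φ.toMonoidHom = (MulAut.conj C).toMonoidHom.comp f₁ := by
    apply FreeGroup.ext_hom
    intro b
    simp only [MonoidHom.comp_apply, MulEquiv.coe_toMonoidHom, MulAut.conj_apply]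
    cases b
    · -- false : f₁ (φ a) = C * A * C⁻¹
      rw [ha, hf₁, _root_.map_inv, FreeGroup.lift_apply_of, FreeGroup.lift_apply_of,
        cond_false, cond_true, hA, hB, hC]
      group
    · -- true : f₁ (φ b) = C * B * C⁻¹
      rw [hb, hf₁, _root_.map_mul, FreeGroup.lift_apply_of, FreeGroup.lift_apply_of,
        cond_false, cond_true, hA, hB, hC]
      rw [show X⁻¹ * Y ^ 2 * X⁻¹ * Y * (Y⁻¹ * Y⁻¹ * X * Y⁻¹ * X)
            = X⁻¹ * (Y ^ 2 * X⁻¹) * (Y⁻¹ * X * Y⁻¹ * X) from by group, hkey]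
      group
  have P1 : ∀ w, f₁ (φ w) = C * f₁ w * C⁻¹ := by
    intro w
    have := DFunLike.congr_fun H1 w
    simpa using this
  have P1' : ∀ w, f₁ (φ⁻¹ w) = C⁻¹ * f₁ w * C := by
    intro w
    have h := P1 (φ⁻¹ w)
    rw [MulAut.apply_inv_self] at h
    rw [h]; group
  have P : ∀ n : ℤ, ∀ w, f₁ ((φ ^ n) w) = C ^ n * f₁ w * (C ^ n)⁻¹ := by
    intro n
    induction n using Int.induction_on with
    | zero => intro w; simp
    | succ k ih =>
      intro w
      have h : ((φ ^ ((k : ℤ) + 1)) w) = (φ ^ (k : ℤ)) (φ w) := by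
        rw [zpow_add_one]; rfl
      rw [h, ih, P1, zpow_add_one]
      group
    | pred k ih =>
      intro w
      have h : ((φ ^ (-(k : ℤ) - 1)) w) = (φ ^ (-(k : ℤ))) (φ⁻¹ w) := by
        rw [zpow_sub_one]; rfl
      rw [h, ih, P1', zpow_sub_one]
      group
  have hcond : ∀ g : Multiplicative ℤ,
      f₁.comp ((zpowersHom (MulAut (FreeGroup Bool)) φ) g).toMonoidHom
        = (MulAut.conj (f₂ g)).toMonoidHom.comp f₁ := by
    intro g
    apply MonoidHom.ext
    intro w
    simp only [MonoidHom.comp_apply, MulEquiv.coe_toMonoidHom, zpowersHom_apply,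
      MulAut.conj_apply, hf₂]
    exact P (Multiplicative.toAdd g) w
  set F := SemidirectProduct.lift f₁ f₂ hcond with hF
  -- the map the other way
  set G := (FreeGroup Bool) ⋊[(zpowersHom (MulAut (FreeGroup Bool)) φ :
      Multiplicative ℤ →* MulAut (FreeGroup Bool))] Multiplicative ℤ with hG
  let _ : Group G := SemidirectProduct.instGroup
  set c : G := SemidirectProduct.inr (Multiplicative.ofAdd 1) with hc
  set ag : G := SemidirectProduct.inl (of false) with hag
  set bg : G := SemidirectProduct.inl (of true) with hbg
  have epow2 : ∀ z : G, z ^ 2 = z * z := fun z => pow_two z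
  have epow3 : ∀ z : G, z ^ 3 = z * z * z := fun z => pow_three' z
  have key1 : c * ag * c⁻¹ = bg⁻¹ := by
    have h := SemidirectProduct.inl_aut (φ := (zpowersHom (MulAut (FreeGroup Bool)) φ))
      (Multiplicative.ofAdd 1) (of false)
    simp only [zpowersHom_apply, toAdd_ofAdd, zpow_one, ha, _root_.map_inv] at h
    rw [hc, hag, hbg]
    exact h.symm
  have key2 : c * bg * c⁻¹ = ag * bg := by
    have h := SemidirectProduct.inl_aut (φ := (zpowersHom (MulAut (FreeGroup Bool)) φ))
      (Multiplicative.ofAdd 1) (of true)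
    simp only [zpowersHom_apply, toAdd_ofAdd, zpow_one, hb, _root_.map_mul, _root_.map_inv] at h
    rw [hc, hag, hbg]
    exact h.symm
  have key1' : c * ag⁻¹ * c⁻¹ = bg := by
    rw [← inv_inv bg, ← key1]; group
  have kB : c⁻¹ * bg * c = ag⁻¹ := by
    rw [← key1']; group
  have kA : c⁻¹ * ag * c = bg * ag := by
    have h2 : c⁻¹ * (ag * bg) * c = bg := by rw [← key2]; group
    calc c⁻¹ * ag * c = (c⁻¹ * (ag * bg) * c) * (c⁻¹ * bg⁻¹ * c) := by group
      _ = bg * (c⁻¹ * bg * c)⁻¹ := by rw [h2]; group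
      _ = bg * ag := by rw [kB, inv_inv]
  have hrel : c⁻¹ * ag * c⁻¹ = ag * c⁻¹ * c⁻¹ * ag := by
    have l1 : c⁻¹ * ag * c⁻¹ = bg * ag * (c⁻¹ * c⁻¹) := by
      rw [show c⁻¹ * ag * c⁻¹ = (c⁻¹ * ag * c) * (c⁻¹ * c⁻¹) from by group, kA]
    have l2 : ag * c⁻¹ * c⁻¹ * ag = bg * ag * (c⁻¹ * c⁻¹) := by
      calc ag * c⁻¹ * c⁻¹ * ag = ag * c⁻¹ * (c⁻¹ * ag * c) * c⁻¹ := by group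
        _ = ag * c⁻¹ * (bg * ag) * c⁻¹ := by rw [kA]
        _ = ag * (c⁻¹ * bg * c) * (c⁻¹ * ag * c) * (c⁻¹ * c⁻¹) := by group
        _ = ag * ag⁻¹ * (bg * ag) * (c⁻¹ * c⁻¹) := by rw [kB, kA]
        _ = bg * ag * (c⁻¹ * c⁻¹) := by group
    rw [l1, l2]
  have hGrel : (c⁻¹ * ag * c⁻¹ * c⁻¹) ^ 2 = (c⁻¹ * ag * c⁻¹) ^ 3 := by
    rw [epow2, epow3]
    calc (c⁻¹ * ag * c⁻¹ * c⁻¹) * (c⁻¹ * ag * c⁻¹ * c⁻¹)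
        = c⁻¹ * (ag * c⁻¹ * c⁻¹) * (c⁻¹ * ag * c⁻¹) * c⁻¹ := by group
      _ = c⁻¹ * (ag * c⁻¹ * c⁻¹) * (ag * c⁻¹ * c⁻¹ * ag) * c⁻¹ := by rw [hrel]
      _ = (c⁻¹ * ag * c⁻¹) * (c⁻¹ * ag * c⁻¹) * (c⁻¹ * ag * c⁻¹) := by group
  have hrels' : ∀ r ∈ rels,
      FreeGroup.lift (fun b => bif b then c⁻¹ * ag * c⁻¹ else c⁻¹ * ag * c⁻¹ * c⁻¹) r = 1 := by
    intro r hr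
    rw [hrels] at hr
    rcases hr with rfl
    rw [_root_.map_mul, _root_.map_inv, _root_.map_pow, _root_.map_pow,
      FreeGroup.lift_apply_of, FreeGroup.lift_apply_of, cond_false, cond_true, mul_inv_eq_one]
    exact hGrel
  set Gm : T →* G := PresentedGroup.toGroup hrels' with hGm
  -- Gm values on generators
  have hGmX : Gm X = c⁻¹ * ag * c⁻¹ * c⁻¹ := by
    rw [hGm, hX, PresentedGroup.toGroup.of, cond_false]
  have hGmY : Gm Y = c⁻¹ * ag * c⁻¹ := by
    rw [hGm, hY, PresentedGroup.toGroup.of, cond_true]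
  -- F values on generators
  have hFa : F ag = A := by
    rw [hag, hF, SemidirectProduct.lift_inl, hf₁, FreeGroup.lift_apply_of, cond_false]
  have hFb : F bg = B := by
    rw [hbg, hF, SemidirectProduct.lift_inl, hf₁, FreeGroup.lift_apply_of, cond_true]
  have hFc : F c = C := by
    rw [hc, hF, SemidirectProduct.lift_inr, hf₂]
    simp
  -- compositions
  have eT2 : Y ^ 2 = Y * Y := pow_two Y
  have E1 : F.comp Gm = MonoidHom.id T := by
    apply PresentedGroup.ext
    intro b
    cases b
    · show F (Gm X) = X
      rw [hGmX]
      simp only [_root_.map_mul, _root_.map_inv, hFa, hFc]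
      rw [hA, hC]; group
    · show F (Gm Y) = Y
      rw [hGmY]
      simp only [_root_.map_mul, _root_.map_inv, hFa, hFc]
      rw [hA, hC]; group
  have E2 : Gm.comp F = MonoidHom.id G := by
    apply SemidirectProduct.hom_ext
    · apply FreeGroup.ext_hom
      intro b
      cases b
      · show Gm (F ag) = ag
        rw [hFa, hA, eT2]
        simp only [_root_.map_mul, _root_.map_inv, hGmX, hGmY]
        group
      · show Gm (F bg) = bg
        rw [hFb, hB]
        simp only [_root_.map_mul, _root_.map_inv, hGmX, hGmY]
        rw [← key1']
        group
    · apply MonoidHom.ext_mint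
      show Gm (F c) = c
      rw [hFc, hC]
      simp only [_root_.map_mul, _root_.map_inv, hGmX, hGmY]
      group
  exact ⟨MonoidHom.toMulEquiv F Gm E2 E1⟩
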